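/- Let f : ℝⁿ → ℝ ∪ {+∞} be locally symmetric around x̄ = λ(X̄) for a symmetric matrix X̄ ∈ Sⁿ, and let M ⊂ ℝⁿ be locally symmetric around x̄ with x̄ ∈ M. If the restriction of f to M is C^p-smooth around x̄ (admits a local C^p extension to ℝⁿ), then there exists a C^p-smooth function agreeing with f on M near x̄ that is additionally invariant under all permutations in Fix(x̄); namely the symmetrization g(x) := (1/|Fix(x̄)|) Σ_{σ ∈ Fix(x̄)} f̃(σx) of any local C^p extension f̃ has these properties. -/

import Mathlib

open Filter Topology
open scoped Classical

lemma norm_comp_perm {n : ℕ} (y : Fin n → ℝ) (σ : Equiv.Perm (Fin n)) :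
    ‖y ∘ σ‖ = ‖y‖ := by
  apply le_antisymm
  · refine pi_norm_le_iff_of_nonneg (norm_nonneg _) |>.2 fun i => ?_
    exact norm_le_pi_norm y (σ i)
  · refine pi_norm_le_iff_of_nonneg (norm_nonneg _) |>.2 fun i => ?_
    have := norm_le_pi_norm (y ∘ σ) (σ.symm i)
    simpa using this

/-- Symmetrized smooth extension: if `f` and `M` are locally symmetric at `x̄ ∈ M` and `f̃` is
a local `C^p` extension of `f|_M`, then the symmetrization
`g(x) = |Fix(x̄)|⁻¹ Σ_{σ ∈ Fix(x̄)} f̃(σx)` is `C^p`, agrees with `f` on `M` near `x̄`, and is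
invariant under every permutation in `Fix(x̄)`. -/
theorem symmetrized_extension (n : ℕ) (p : ℕ∞) (f : (Fin n → ℝ) → EReal)
    (M : Set (Fin n → ℝ)) (x₀ : Fin n → ℝ) (hx₀ : x₀ ∈ M)
    (hfsym : ∃ ε > (0:ℝ), ∀ σ : Equiv.Perm (Fin n), x₀ ∘ σ = x₀ →
      ∀ x : Fin n → ℝ, ‖x - x₀‖ < ε → f (x ∘ σ) = f x)
    (hMsym : ∃ ε > (0:ℝ), ∀ σ : Equiv.Perm (Fin n), x₀ ∘ σ = x₀ →
      ∀ x : Fin n → ℝ, ‖x - x₀‖ < ε → (x ∈ M ↔ x ∘ σ ∈ M))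
    (ftil : (Fin n → ℝ) → ℝ) (hsm : ContDiff ℝ p ftil)
    (hagree : ∃ δ > (0:ℝ), ∀ x ∈ M, ‖x - x₀‖ < δ → f x = ((ftil x : ℝ) : EReal)) :
    ContDiff ℝ p (fun x : Fin n → ℝ =>
        (((Finset.univ.filter fun σ : Equiv.Perm (Fin n) => x₀ ∘ σ = x₀).card : ℝ))⁻¹ *
          ∑ σ ∈ Finset.univ.filter fun σ : Equiv.Perm (Fin n) => x₀ ∘ σ = x₀, ftil (x ∘ σ)) ∧
    (∃ δ > (0:ℝ), ∀ x ∈ M, ‖x - x₀‖ < δ →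
      f x = ((((Finset.univ.filter fun σ : Equiv.Perm (Fin n) => x₀ ∘ σ = x₀).card : ℝ))⁻¹ *
          ∑ σ ∈ Finset.univ.filter fun σ : Equiv.Perm (Fin n) => x₀ ∘ σ = x₀, ftil (x ∘ σ)
        : ℝ)) ∧
    ∀ τ : Equiv.Perm (Fin n), x₀ ∘ τ = x₀ → ∀ x : Fin n → ℝ,
      (((Finset.univ.filter fun σ : Equiv.Perm (Fin n) => x₀ ∘ σ = x₀).card : ℝ))⁻¹ *
          ∑ σ ∈ Finset.univ.filter fun σ : Equiv.Perm (Fin n) => x₀ ∘ σ = x₀, ftil ((x ∘ τ) ∘ σ)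
        = (((Finset.univ.filter fun σ : Equiv.Perm (Fin n) => x₀ ∘ σ = x₀).card : ℝ))⁻¹ *
          ∑ σ ∈ Finset.univ.filter fun σ : Equiv.Perm (Fin n) => x₀ ∘ σ = x₀, ftil (x ∘ σ) := by
  set S : Finset (Equiv.Perm (Fin n)) :=
    Finset.univ.filter fun σ : Equiv.Perm (Fin n) => x₀ ∘ σ = x₀ with hS
  have hmemS : ∀ σ : Equiv.Perm (Fin n), σ ∈ S ↔ x₀ ∘ σ = x₀ := by
    intro σ; simp [hS]
  have h1S : (1 : Equiv.Perm (Fin n)) ∈ S := by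
    rw [hmemS]; ext i; rfl
  have hScard : (S.card : ℝ) ≠ 0 := by
    have : S.Nonempty := ⟨1, h1S⟩
    exact_mod_cast Finset.card_ne_zero_of_mem h1S
  refine ⟨?_, ?_, ?_⟩
  · -- smoothness
    apply ContDiff.mul contDiff_const
    apply ContDiff.sum
    intro σ hσ
    exact hsm.comp (contDiff_pi.2 fun i => (ContinuousLinearMap.proj (R := ℝ) (φ := fun _ : Fin n => ℝ) (σ i)).contDiff)
  · -- agreement
    obtain ⟨ε₁, hε₁, hfs⟩ := hfsym
    obtain ⟨ε₂, hε₂, hMs⟩ := hMsym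
    obtain ⟨δ₀, hδ₀, hag⟩ := hagree
    refine ⟨min ε₁ (min ε₂ δ₀), by positivity, fun x hxM hxδ => ?_⟩
    have hx1 : ‖x - x₀‖ < ε₁ := lt_of_lt_of_le hxδ (min_le_left _ _)
    have hx2 : ‖x - x₀‖ < ε₂ :=
      lt_of_lt_of_le hxδ ((min_le_right _ _).trans (min_le_left _ _))
    have hx3 : ‖x - x₀‖ < δ₀ :=
      lt_of_lt_of_le hxδ ((min_le_right _ _).trans (min_le_right _ _))
    have key : ∀ σ ∈ S, ftil (x ∘ σ) = ftil x := by
      intro σ hσ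
      rw [hmemS] at hσ
      have hnorm : ‖x ∘ σ - x₀‖ = ‖x - x₀‖ := by
        have : x ∘ σ - x₀ = (x - x₀) ∘ σ := by
          ext i
          have : x₀ (σ i) = x₀ i := congrFun hσ i
          simp [this]
        rw [this, norm_comp_perm]
      have hxσM : x ∘ σ ∈ M := (hMs σ hσ x hx2).1 hxM
      have e1 : f (x ∘ σ) = f x := hfs σ hσ x hx1
      have e2 : f (x ∘ σ) = ((ftil (x ∘ σ) : ℝ) : EReal) := by
        apply hag _ hxσM; rw [hnorm]; exact hx3
      have e3 : f x = ((ftil x : ℝ) : EReal) := hag x hxM hx3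
      have : ((ftil (x ∘ σ) : ℝ) : EReal) = ((ftil x : ℝ) : EReal) := by
        rw [← e2, e1, e3]
      exact_mod_cast this
    have hsum : ∑ σ ∈ S, ftil (x ∘ σ) = (S.card : ℝ) * ftil x := by
      rw [Finset.sum_congr rfl key, Finset.sum_const, nsmul_eq_mul]
    rw [hsum, ← mul_assoc, inv_mul_cancel₀ hScard, one_mul]
    exact hag x hxM hx3
  · -- invariance
    intro τ hτ x
    congr 1
    have hSclosed : ∀ σ ∈ S, τ * σ ∈ S := by
      intro σ hσ
      rw [hmemS] at hσ ⊢
      have : x₀ ∘ ⇑(τ * σ) = (x₀ ∘ τ) ∘ σ := rfl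
      rw [this, hτ, hσ]
    refine Finset.sum_nbij' (fun σ => τ * σ) (fun σ => τ⁻¹ * σ) hSclosed
      (fun σ hσ => ?_) (fun σ _ => by group) (fun σ _ => by group) (fun σ hσ => ?_)
    · rw [hmemS] at hσ ⊢
      have h1 : x₀ ∘ ⇑(τ⁻¹) = x₀ := by
        ext i
        have := congrFun hτ (τ⁻¹ i)
        simpa using this.symm
      have : x₀ ∘ ⇑(τ⁻¹ * σ) = (x₀ ∘ ⇑(τ⁻¹)) ∘ σ := rfl
      rw [this, h1, hσ]
    · show ftil ((x ∘ τ) ∘ σ) = ftil (x ∘ ⇑(τ * σ))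
      rfl
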